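/- Let γ > 0 and 0 < a < b < 1. Define S(u,v) = ∫_u^v e^{-1/(2z)}·√(z/(1−z)) dz and P(y) = S(a,y)/S(a,b) for y ∈ [a,b]. Then P(a) = 0, P(b) = 1, P is strictly increasing on [a,b], and for every y ∈ (a,b), P is twice differentiable at y with −γ y·P'(y) + 2γ y³(1−y)·P''(y) = 0. -/

import Mathlib

/-- Optimal homodyne scale density Q(z) = e^{-1/(2z)}·√(z/(1−z)). -/
noncomputable def Qhom (z : ℝ) : ℝ :=
  Real.exp (-1 / (2 * z)) * Real.sqrt (z / (1 - z))

/-- Optimal homodyne scale integral S(u,v) = ∫_u^v Q(z) dz. -/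
noncomputable def Shom (u v : ℝ) : ℝ := ∫ z in u..v, Qhom z

lemma Qhom_pos {z : ℝ} (h0 : 0 < z) (h1 : z < 1) : 0 < Qhom z :=
  mul_pos (Real.exp_pos _) (Real.sqrt_pos.2 (div_pos h0 (by linarith)))

lemma Qhom_hasDerivAt {y : ℝ} (h0 : 0 < y) (h1 : y < 1) :
    HasDerivAt Qhom (Qhom y / (2 * y ^ 2 * (1 - y))) y := by
  have hy : y ≠ 0 := ne_of_gt h0
  have h1y : (1 : ℝ) - y ≠ 0 := by linarith
  have hg : HasDerivAt (fun z : ℝ => z / (1 - z)) (1 / (1 - y) ^ 2) y := by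
    have := (hasDerivAt_id y).div ((hasDerivAt_const y 1).sub (hasDerivAt_id y)) h1y
    refine this.congr_deriv ?_
    simp only [Pi.sub_apply, Pi.mul_apply, id_eq]
    field_simp
    ring
  have hgy : y / (1 - y) ≠ 0 := by positivity
  have hsqrt : HasDerivAt (fun z : ℝ => Real.sqrt (z / (1 - z)))
      ((1 / (1 - y) ^ 2) / (2 * Real.sqrt (y / (1 - y)))) y := hg.sqrt hgy
  have hinner : HasDerivAt (fun z : ℝ => -1 / (2 * z)) (1 / (2 * y ^ 2)) y := by
    have := (hasDerivAt_const y (-1 : ℝ)).div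
      ((hasDerivAt_const y (2 : ℝ)).mul (hasDerivAt_id y)) (by simp [hy])
    refine this.congr_deriv ?_
    simp only [Pi.sub_apply, Pi.mul_apply, id_eq]
    field_simp
    ring
  have hexp : HasDerivAt (fun z : ℝ => Real.exp (-1 / (2 * z)))
      (Real.exp (-1 / (2 * y)) * (1 / (2 * y ^ 2))) y := hinner.exp
  have h := hexp.mul hsqrt
  refine h.congr_deriv ?_
  symm
  set s := Real.sqrt (y / (1 - y)) with hsdef
  set E := Real.exp (-1 / (2 * y)) with hEdef
  have hs : 0 < s := Real.sqrt_pos.2 (div_pos h0 (by linarith))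
  have hss : s * s * (1 - y) = y := by
    rw [hsdef, Real.mul_self_sqrt (le_of_lt (div_pos h0 (by linarith)))]
    field_simp
  show Qhom y / (2 * y ^ 2 * (1 - y)) =
      E * (1 / (2 * y ^ 2)) * s + E * (1 / (1 - y) ^ 2 / (2 * s))
  have hQ : Qhom y = E * s := rfl
  rw [hQ, div_eq_iff (by positivity : (2:ℝ) * y ^ 2 * (1 - y) ≠ 0)]
  field_simp
  linear_combination (E * y) * hss

lemma Qhom_continuousAt {y : ℝ} (h0 : 0 < y) (h1 : y < 1) : ContinuousAt Qhom y :=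
  (Qhom_hasDerivAt h0 h1).differentiableAt.continuousAt

lemma Qhom_contOn : ContinuousOn Qhom (Set.Ioo 0 1) := fun y hy =>
  (Qhom_continuousAt hy.1 hy.2).continuousWithinAt

lemma Qhom_intble {a b u v : ℝ} (ha : 0 < a) (hb : b < 1) (hab : a ≤ b)
    (hu : u ∈ Set.Icc a b) (hv : v ∈ Set.Icc a b) :
    IntervalIntegrable Qhom MeasureTheory.volume u v := by
  apply ContinuousOn.intervalIntegrable
  apply Qhom_contOn.mono
  intro z hz
  rcases Set.mem_uIcc.1 hz with h | h
  · exact ⟨lt_of_lt_of_le ha (le_trans hu.1 h.1), lt_of_le_of_lt (le_trans h.2 hv.2) hb⟩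
  · exact ⟨lt_of_lt_of_le ha (le_trans hv.1 h.1), lt_of_le_of_lt (le_trans h.2 hu.2) hb⟩

/-- P(y) = S(a,y)/S(a,b), the probability under optimal homodyne detection
that the excited state population starting from y ∈ [a,b] hits b before a,
satisfies P(a) = 0, P(b) = 1, is strictly increasing on [a,b], and solves
the adjoint equation −γy P'(y) + 2γy³(1−y) P''(y) = 0 on (a,b). -/
theorem hom_hit_prob (γ a b : ℝ) (hγ : 0 < γ) (ha : 0 < a) (hab : a < b)
    (hb : b < 1) :
    let P : ℝ → ℝ := fun y => Shom a y / Shom a b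
    P a = 0 ∧ P b = 1 ∧ StrictMonoOn P (Set.Icc a b) ∧
    ∀ y ∈ Set.Ioo a b, ∃ p' p'' : ℝ,
      HasDerivAt P p' y ∧ HasDerivAt (deriv P) p'' y ∧
      -γ * y * p' + 2 * γ * y ^ 3 * (1 - y) * p'' = 0 := by
  intro P
  have hb1 : a < 1 := lt_trans hab hb
  have haIcc : a ∈ Set.Icc a b := ⟨le_refl a, le_of_lt hab⟩
  have hbIcc : b ∈ Set.Icc a b := ⟨le_of_lt hab, le_refl b⟩
  -- integrability of Qhom on subintervals of [a,b]
  have hint : ∀ u ∈ Set.Icc a b, ∀ v ∈ Set.Icc a b,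
      IntervalIntegrable Qhom MeasureTheory.volume u v :=
    fun u hu v hv => Qhom_intble ha hb (le_of_lt hab) hu hv
  -- S(u,v) > 0 for a ≤ u < v ≤ b
  have hSpos : ∀ u ∈ Set.Icc a b, ∀ v ∈ Set.Icc a b, u < v → 0 < Shom u v := by
    intro u hu v hv huv
    apply intervalIntegral.intervalIntegral_pos_of_pos_on (hint u hu v hv) _ huv
    intro x hx
    exact Qhom_pos (lt_of_lt_of_le ha (le_trans hu.1 (le_of_lt hx.1)))
      (lt_of_le_of_lt (le_trans (le_of_lt hx.2) hv.2) hb)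
  have hSab : 0 < Shom a b := hSpos a haIcc b hbIcc hab
  have hSab' : Shom a b ≠ 0 := ne_of_gt hSab
  -- additivity
  have hadd : ∀ u ∈ Set.Icc a b, Shom a u + Shom u b = Shom a b := by
    intro u hu
    exact intervalIntegral.integral_add_adjacent_intervals
      (hint a haIcc u hu) (hint u hu b hbIcc)
  refine ⟨?_, ?_, ?_, ?_⟩
  · show Shom a a / Shom a b = 0
    simp [Shom]
  · show Shom a b / Shom a b = 1
    exact div_self hSab'
  · -- strict monotonicity
    intro x hx y hy hxy
    show Shom a x / Shom a b < Shom a y / Shom a b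
    have h2 : Shom a x + Shom x y = Shom a y :=
      intervalIntegral.integral_add_adjacent_intervals
        (hint a haIcc x hx) (hint x hx y hy)
    have hpos := hSpos x hx y hy hxy
    have hlt : Shom a x < Shom a y := by linarith
    gcongr
  · intro y hy
    have hy0 : 0 < y := lt_trans ha hy.1
    have hy1 : y < 1 := lt_trans hy.2 hb
    have hP' : ∀ z ∈ Set.Ioo a b, HasDerivAt P (Qhom z / Shom a b) z := by
      intro z hz
      have hz0 : 0 < z := lt_trans ha hz.1
      have hz1 : z < 1 := lt_trans hz.2 hb
      have hS : HasDerivAt (fun u => Shom a u) (Qhom z) z :=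
        intervalIntegral.integral_hasDerivAt_right
          (hint a haIcc z ⟨le_of_lt hz.1, le_of_lt hz.2⟩)
          (Qhom_contOn.stronglyMeasurableAtFilter isOpen_Ioo z ⟨hz0, hz1⟩)
          (Qhom_continuousAt hz0 hz1)
      exact hS.div_const _
    have hEq : deriv P =ᶠ[nhds y] (fun z => Qhom z / Shom a b) :=
      Filter.eventuallyEq_of_mem (Ioo_mem_nhds hy.1 hy.2)
        (fun z hz => (hP' z hz).deriv)
    have hQ' := Qhom_hasDerivAt hy0 hy1
    have hP'' : HasDerivAt (deriv P)
        ((Qhom y / (2 * y ^ 2 * (1 - y))) / Shom a b) y :=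
      (hQ'.div_const _).congr_of_eventuallyEq hEq
    refine ⟨Qhom y / Shom a b, (Qhom y / (2 * y ^ 2 * (1 - y))) / Shom a b,
      hP' y hy, hP'', ?_⟩
    have h1y : (1 : ℝ) - y ≠ 0 := by linarith
    have hyne : y ≠ 0 := ne_of_gt hy0
    field_simp
    ring
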